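/- Any pair of differentiable functions (a,b) on (1,∞) satisfying da/dr = -r/(2R₋²), db/dr = -r/(2R₊²), R₊²(1-b²) = R₋²(1-a²) and ab = 0 (with R₊² = (r²+1)/2, R₋² = (r²-1)/2) must have a ≡ 0 and b(r) = ±√2/√(r²+1). -/
import Mathlib


/-- The invariant HYM system for SO(3)-connections on `P_Id`: the ODEs
`da/dr = -(r/(2R₋²))·a`, `db/dr = -(r/(2R₊²))·b` together with the algebraic constraints
`R₊²(1-b²) = R₋²(1-a²)` and `ab = 0`, where `R₊² = (r²+1)/2`, `R₋² = (r²-1)/2`. -/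
def IsInvariantHYM (a b : ℝ → ℝ) : Prop :=
  ∀ r ∈ Set.Ioi (1 : ℝ),
    HasDerivAt a (-(r / (2 * ((r ^ 2 - 1) / 2))) * a r) r ∧
    HasDerivAt b (-(r / (2 * ((r ^ 2 + 1) / 2))) * b r) r ∧
    ((r ^ 2 + 1) / 2) * (1 - (b r) ^ 2) = ((r ^ 2 - 1) / 2) * (1 - (a r) ^ 2) ∧
    a r * b r = 0

/-- Any differentiable solution of the invariant HYM system on `(1,∞)` has `a ≡ 0` and
`b(r) = ±√2/√(r²+1)`. -/
theorem stenzel_so3_hym_classification (a b : ℝ → ℝ) (h : IsInvariantHYM a b) :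
    (∀ r ∈ Set.Ioi (1 : ℝ), a r = 0) ∧
    ((∀ r ∈ Set.Ioi (1 : ℝ), b r = Real.sqrt 2 / Real.sqrt (r ^ 2 + 1)) ∨
      (∀ r ∈ Set.Ioi (1 : ℝ), b r = -(Real.sqrt 2 / Real.sqrt (r ^ 2 + 1)))) := by
  -- a ≡ 0 from the algebraic constraints alone
  have ha : ∀ r ∈ Set.Ioi (1 : ℝ), a r = 0 := by
    intro r hr
    have hr1 : (1 : ℝ) < r := hr
    obtain ⟨-, -, hc, hab⟩ := h r hr
    by_contra hne
    have hb0 : b r = 0 := by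
      rcases mul_eq_zero.1 hab with h' | h'
      · exact absurd h' hne
      · exact h'
    have ha2 : 0 < (a r) ^ 2 := by positivity
    rw [hb0] at hc
    nlinarith [mul_pos (show (0:ℝ) < (r^2-1)/2 by nlinarith) ha2]
  -- b² = 2/(r²+1)
  have hb2 : ∀ r ∈ Set.Ioi (1 : ℝ), (b r) ^ 2 = 2 / (r ^ 2 + 1) := by
    intro r hr
    have hr1 : (1 : ℝ) < r := hr
    obtain ⟨-, -, hc, -⟩ := h r hr
    rw [ha r hr] at hc
    have hpos : (0 : ℝ) < r ^ 2 + 1 := by positivity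
    field_simp
    nlinarith
  -- let g be the positive branch
  set g : ℝ → ℝ := fun r => Real.sqrt 2 / Real.sqrt (r ^ 2 + 1) with hg
  have hgpos : ∀ r : ℝ, 0 < g r := by
    intro r
    have : (0:ℝ) < r ^ 2 + 1 := by positivity
    simp only [hg]
    positivity
  have hgsq : ∀ r : ℝ, (g r) ^ 2 = 2 / (r ^ 2 + 1) := by
    intro r
    have h1 : (0:ℝ) ≤ 2 := by norm_num
    have h2 : (0:ℝ) ≤ r ^ 2 + 1 := by positivity
    simp only [hg, div_pow, Real.sq_sqrt h1, Real.sq_sqrt h2]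
  have hbne : ∀ r ∈ Set.Ioi (1 : ℝ), b r ≠ 0 := by
    intro r hr hb0
    have := hb2 r hr
    rw [hb0] at this
    have hpos : (0 : ℝ) < r ^ 2 + 1 := by positivity
    have : (0:ℝ) = 2 / (r ^ 2 + 1) := by simpa using this
    have h2 : (0:ℝ) < 2 / (r ^ 2 + 1) := by positivity
    linarith
  have hpm : ∀ r ∈ Set.Ioi (1 : ℝ), b r = g r ∨ b r = -g r := by
    intro r hr
    have h1 : (b r - g r) * (b r + g r) = 0 := by
      have := hb2 r hr
      have := hgsq r
      nlinarith
    rcases mul_eq_zero.1 h1 with h' | h'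
    · left; linarith
    · right; linarith
  -- continuity of b on Ioi 1
  have hcont : ContinuousOn b (Set.Ioi (1 : ℝ)) := fun r hr =>
    ((h r hr).2.1).continuousAt.continuousWithinAt
  refine ⟨ha, ?_⟩
  have h2mem : (2 : ℝ) ∈ Set.Ioi (1 : ℝ) := by norm_num
  -- sign of b is constant: compare with b 2
  have hsign : ∀ r ∈ Set.Ioi (1 : ℝ), (0 < b 2 → 0 < b r) ∧ (b 2 < 0 → b r < 0) := by
    intro r hr
    have hr1 : (1 : ℝ) < r := hr
    have key : ¬ (0 < b 2 ∧ b r < 0) ∧ ¬ (b 2 < 0 ∧ 0 < b r) := by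
      constructor
      · rintro ⟨h2pos, hrneg⟩
        rcases le_total r 2 with hle | hle
        · have hsub : Set.Icc r 2 ⊆ Set.Ioi (1 : ℝ) := fun x hx => lt_of_lt_of_le hr1 hx.1
          have := intermediate_value_Icc hle (hcont.mono hsub)
            (Set.mem_Icc.2 ⟨le_of_lt hrneg, le_of_lt h2pos⟩)
          obtain ⟨c, hc, hc0⟩ := this
          exact hbne c (hsub hc) hc0
        · have hsub : Set.Icc 2 r ⊆ Set.Ioi (1 : ℝ) := fun x hx => lt_of_lt_of_le one_lt_two hx.1
          have := intermediate_value_Icc' hle (hcont.mono hsub)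
            (Set.mem_Icc.2 ⟨le_of_lt hrneg, le_of_lt h2pos⟩)
          obtain ⟨c, hc, hc0⟩ := this
          exact hbne c (hsub hc) hc0
      · rintro ⟨h2neg, hrpos⟩
        rcases le_total r 2 with hle | hle
        · have hsub : Set.Icc r 2 ⊆ Set.Ioi (1 : ℝ) := fun x hx => lt_of_lt_of_le hr1 hx.1
          have := intermediate_value_Icc' hle (hcont.mono hsub)
            (Set.mem_Icc.2 ⟨le_of_lt h2neg, le_of_lt hrpos⟩)
          obtain ⟨c, hc, hc0⟩ := this
          exact hbne c (hsub hc) hc0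
        · have hsub : Set.Icc 2 r ⊆ Set.Ioi (1 : ℝ) := fun x hx => lt_of_lt_of_le one_lt_two hx.1
          have := intermediate_value_Icc hle (hcont.mono hsub)
            (Set.mem_Icc.2 ⟨le_of_lt h2neg, le_of_lt hrpos⟩)
          obtain ⟨c, hc, hc0⟩ := this
          exact hbne c (hsub hc) hc0
    refine ⟨fun h2pos => ?_, fun h2neg => ?_⟩
    · rcases lt_trichotomy (b r) 0 with h' | h' | h'
      · exact absurd ⟨h2pos, h'⟩ key.1
      · exact absurd h' (hbne r hr)
      · exact h'
    · rcases lt_trichotomy (b r) 0 with h' | h' | h'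
      · exact h'
      · exact absurd h' (hbne r hr)
      · exact absurd ⟨h2neg, h'⟩ key.2
  rcases (hbne 2 h2mem).lt_or_gt with h2neg | h2pos
  · right
    intro r hr
    have hrneg := (hsign r hr).2 h2neg
    rcases hpm r hr with h' | h'
    · exact absurd h' (by nlinarith [hgpos r])
    · exact h'
  · left
    intro r hr
    have hrpos := (hsign r hr).1 h2pos
    rcases hpm r hr with h' | h'
    · exact h'
    · exact absurd h' (by nlinarith [hgpos r])
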